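/- The dimension of the ℂ-linear span of the path tensors {ψ(i,e) : i ∈ Fin d, e ∈ E^i} is at most |E| − (Σ_{i ∈ Fin d} w i) + 1, where |E| = Σ_{i ∈ Fin d} w i · w (i+1). -/
import Mathlib


open scoped BigOperators

attribute [local instance] Classical.propDecidable

namespace ABP

variable {d : ℕ} [NeZero d]

/-- The set of edges in layer `i` of a (cyclic / trace) ABP of width format `w`:
an edge `(a, b)` goes from vertex `a` of layer `i` to vertex `b` of layer `i + 1`
(layer indices modulo `d`). -/
abbrev Edge (w : Fin d → ℕ) (i : Fin d) : Type := Fin (w i) × Fin (w (i + 1))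

/-- An edge tuple is a valid path if consecutive edges match (cyclically). -/
def ValidPath (w : Fin d → ℕ) (p : ∀ i : Fin d, Edge w i) : Prop :=
  ∀ i : Fin d, (p i).2 = (p (i + 1)).1

/-- An edge is parity preserving if its two endpoints have the same parity. -/
def ParityPres {w : Fin d → ℕ} {i : Fin d} (e : Edge w i) : Prop :=
  e.1.val % 2 = e.2.val % 2

/-- The number of parity-preserving edges of an edge tuple. -/
noncomputable def ppCount (w : Fin d → ℕ) (p : ∀ i : Fin d, Edge w i) : ℕ :=
  (Finset.univ.filter fun i : Fin d => ParityPres (p i)).card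

/-- The tensor `f_com`: value 1 on valid paths, 0 elsewhere. -/
noncomputable def fcom (w : Fin d → ℕ) : (∀ i : Fin d, Edge w i) → ℂ :=
  fun p => if ValidPath w p then 1 else 0

/-- The tensor `f_0`: value 1 on valid paths containing exactly one
parity-preserving edge, 0 elsewhere. -/
noncomputable def f0 (w : Fin d → ℕ) : (∀ i : Fin d, Edge w i) → ℂ :=
  fun p => if ValidPath w p ∧ ppCount w p = 1 then 1 else 0

/-- The action of a tuple of matrices `g i : E^i → E^i → ℂ` on a tensor:
`((⊗ᵢ gᵢ) f)(p) = Σ_q (Πᵢ gᵢ (p i) (q i)) · f q`. -/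
noncomputable def actT (w : Fin d → ℕ) (g : ∀ i : Fin d, Edge w i → Edge w i → ℂ)
    (f : (∀ i : Fin d, Edge w i) → ℂ) : (∀ i : Fin d, Edge w i) → ℂ :=
  fun p => ∑ q : ∀ i : Fin d, Edge w i, (∏ i : Fin d, g i (p i) (q i)) * f q

end ABP

namespace ABP

/-- The path tensor `ψ(i,e)`: value 1 on valid paths whose `i`-th edge is `e`,
0 elsewhere. -/
noncomputable def psi {d : ℕ} [NeZero d] (w : Fin d → ℕ) (i : Fin d) (e : Edge w i) :
    (∀ i : Fin d, Edge w i) → ℂ :=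
  fun p => if ValidPath w p ∧ p i = e then 1 else 0

end ABP

namespace ABPAux
open ABP

variable {d : ℕ} [NeZero d] (w : Fin d → ℕ)

noncomputable def T (i : Fin d) (a : Fin (w i)) : (∀ i : Fin d, Edge w i) → ℂ :=
  fun p => if ValidPath w p ∧ (p i).1 = a then 1 else 0

lemma sum_psi_fst (i : Fin d) (a : Fin (w i)) :
    ∑ b : Fin (w (i + 1)), psi w i (a, b) = T w i a := by
  funext p
  rw [Finset.sum_apply]
  have h : ∀ b : Fin (w (i + 1)),
      psi w i (a, b) p = if (ValidPath w p ∧ (p i).1 = a) ∧ (p i).2 = b then 1 else 0 := by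
    intro b
    apply if_congr _ rfl rfl
    rw [Prod.ext_iff]; tauto
  rw [Finset.sum_congr rfl fun b _ => h b]
  by_cases hc : ValidPath w p ∧ (p i).1 = a <;> simp [hc, T, Finset.sum_ite_eq]

lemma sum_psi_snd (j : Fin d) (b : Fin (w (j + 1))) :
    ∑ c : Fin (w j), psi w j (c, b) = T w (j + 1) b := by
  funext p
  rw [Finset.sum_apply]
  have h : ∀ c : Fin (w j),
      psi w j (c, b) p = if (ValidPath w p ∧ (p (j + 1)).1 = b) ∧ (p j).1 = c then 1 else 0 := by
    intro c
    apply if_congr _ rfl rfl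
    rw [Prod.ext_iff]
    constructor
    · rintro ⟨hv, h1, h2⟩
      exact ⟨⟨hv, (hv j).symm.trans h2⟩, h1⟩
    · rintro ⟨⟨hv, h1⟩, h2⟩
      exact ⟨hv, h2, (hv j).trans h1⟩
  rw [Finset.sum_congr rfl fun c _ => h c]
  by_cases hc : ValidPath w p ∧ (p (j + 1)).1 = b <;> simp [hc, T, Finset.sum_ite_eq]

lemma sum_T (i : Fin d) : ∑ a : Fin (w i), T w i a = fcom w := by
  funext p
  rw [Finset.sum_apply]
  simp only [T]
  by_cases hv : ValidPath w p <;> simp [hv, fcom, Finset.sum_ite_eq]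

/-- The generating family of size `∑ wᵢ (wᵢ₊₁ - 1) + 1`. -/
noncomputable def gen :
    (Σ i : Fin d, Fin (w i) × {b : Fin (w (i + 1)) // b.val ≠ 0}) ⊕ Unit →
      (∀ i : Fin d, Edge w i) → ℂ
  | Sum.inl ⟨i, a, b⟩ => psi w i (a, b.1)
  | Sum.inr _ => fcom w

lemma T_mem_span (i : Fin d) (a : Fin (w i)) :
    T w i a ∈ Submodule.span ℂ (Set.range (gen w)) := by
  obtain ⟨j, rfl⟩ : ∃ j : Fin d, i = j + 1 := ⟨i - 1, by rw [sub_add_cancel]⟩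
  have hne : ∀ b : Fin (w (j + 1)), b.val ≠ 0 →
      T w (j + 1) b ∈ Submodule.span ℂ (Set.range (gen w)) := by
    intro b hb
    rw [← sum_psi_snd]
    exact Submodule.sum_mem _ fun c _ =>
      Submodule.subset_span ⟨Sum.inl ⟨j, c, ⟨b, hb⟩⟩, rfl⟩
  by_cases ha : a.val ≠ 0
  · exact hne a ha
  · push_neg at ha
    have hsum := sum_T w (j + 1)
    rw [← Finset.add_sum_erase _ _ (Finset.mem_univ a)] at hsum
    have : T w (j + 1) a
        = fcom w - ∑ b ∈ Finset.univ.erase a, T w (j + 1) b := by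
      rw [← hsum]; abel
    rw [this]
    refine Submodule.sub_mem _ (Submodule.subset_span ⟨Sum.inr (), rfl⟩) ?_
    refine Submodule.sum_mem _ fun b hb => hne b ?_
    intro h0
    exact (Finset.mem_erase.1 hb).1 (Fin.ext (h0.trans ha.symm))

lemma psi_mem_span (i : Fin d) (e : Edge w i) :
    psi w i e ∈ Submodule.span ℂ (Set.range (gen w)) := by
  obtain ⟨a, b⟩ := e
  by_cases hb : b.val ≠ 0
  · exact Submodule.subset_span ⟨Sum.inl ⟨i, a, ⟨b, hb⟩⟩, rfl⟩
  · push_neg at hb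
    have hsum := sum_psi_fst w i a
    rw [← Finset.add_sum_erase _ _ (Finset.mem_univ b)] at hsum
    have : psi w i (a, b)
        = T w i a - ∑ b' ∈ Finset.univ.erase b, psi w i (a, b') := by
      rw [← hsum]; abel
    rw [this]
    refine Submodule.sub_mem _ (T_mem_span w i a) ?_
    refine Submodule.sum_mem _ fun b' hb' =>
      Submodule.subset_span ⟨Sum.inl ⟨i, a, ⟨b', fun h0 => (Finset.mem_erase.1 hb').1 (Fin.ext (h0.trans hb.symm))⟩⟩, rfl⟩

end ABPAux

/-- The dimension of the span of the path tensors
`{ψ(i,e)}` is at most `|E| − Σᵢ w i + 1`, where `|E| = Σᵢ w i · w (i+1)`. -/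
theorem psi_span_dim_le (d : ℕ) [NeZero d] (hd3 : 3 ≤ d) (hodd : Odd d)
    (w : Fin d → ℕ) (hw : ∀ i, 2 ≤ w i) :
    Module.finrank ℂ (Submodule.span ℂ
        (Set.range fun x : Σ i : Fin d, ABP.Edge w i => ABP.psi w x.1 x.2)) ≤
      (∑ i : Fin d, w i * w (i + 1)) - (∑ i : Fin d, w i) + 1 := by

  have hle : Submodule.span ℂ
        (Set.range fun x : Σ i : Fin d, ABP.Edge w i => ABP.psi w x.1 x.2)
      ≤ Submodule.span ℂ (Set.range (ABPAux.gen w)) := by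
    rw [Submodule.span_le]
    rintro _ ⟨⟨i, e⟩, rfl⟩
    exact ABPAux.psi_mem_span w i e
  have h1 : Module.finrank ℂ (Submodule.span ℂ
        (Set.range fun x : Σ i : Fin d, ABP.Edge w i => ABP.psi w x.1 x.2))
      ≤ Module.finrank ℂ (Submodule.span ℂ (Set.range (ABPAux.gen w))) :=
    Submodule.finrank_mono hle
  have h2 := finrank_range_le_card (R := ℂ) (ABPAux.gen w)
  rw [Set.finrank] at h2
  have hcard : Fintype.card
      ((Σ i : Fin d, Fin (w i) × {b : Fin (w (i + 1)) // b.val ≠ 0}) ⊕ Unit)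
      = (∑ i : Fin d, w i * (w (i + 1) - 1)) + 1 := by
    have hsub : ∀ i : Fin d, Fintype.card {b : Fin (w (i + 1)) // b.val ≠ 0} = w (i + 1) - 1 := by
      intro i
      rw [Fintype.card_subtype_compl]
      congr 1
      · simp
      · have h0 : (0:ℕ) < w (i + 1) := lt_of_lt_of_le two_pos (hw _)
        exact Fintype.card_eq_one_iff.mpr
          ⟨⟨⟨0, h0⟩, rfl⟩, fun y => Subtype.ext (Fin.ext y.2)⟩
    simp [Fintype.card_sigma, hsub]
  rw [hcard] at h2
  refine (h1.trans h2).trans ?_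
  have hsum : (∑ i : Fin d, w i * (w (i + 1) - 1)) + ∑ i : Fin d, w i
      = ∑ i : Fin d, w i * w (i + 1) := by
    rw [← Finset.sum_add_distrib]
    refine Finset.sum_congr rfl fun i _ => ?_
    have h1' : 0 < w (i + 1) := lt_of_lt_of_le two_pos (hw _)
    conv_rhs => rw [← Nat.succ_pred_eq_of_pos h1', Nat.mul_succ]
    rfl
  omega
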